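/- Let b ∈ C([0,1]²) with ∂_s b continuous and b(t,0) > 0 for all t, and let a ∈ L^∞([0,1]). If ∫₀^u b(t, u−t) a(t) dt = 0 for every u ∈ [0,1], then a = 0 almost everywhere. -/

import Mathlib

open Real Set intervalIntegral MeasureTheory

lemma ofReal_max_zero (x : ℝ) : ENNReal.ofReal (max x 0) = ENNReal.ofReal x := by
  rcases le_total x 0 with h | h
  · simp [max_eq_right h, ENNReal.ofReal_of_nonpos h]
  · rw [max_eq_left h]

lemma lemA (f : ℝ → ℝ)
    (hint : IntegrableOn f (Ioc (0:ℝ) 1) volume)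
    (h0 : ∀ u ∈ Icc (0:ℝ) 1, ∫ t in Ioc (0:ℝ) u, f t = 0) :
    ∀ᵐ t ∂(volume.restrict (Ioc (0:ℝ) 1)), f t = 0 := by
  set μ := volume.restrict (Ioc (0:ℝ) 1) with hμ
  have hm : AEStronglyMeasurable f μ := hint.1
  have hma : AEMeasurable f μ := hm.aemeasurable
  have key : ∀ c d : ℝ, 0 ≤ c → c ≤ d → d ≤ 1 → ∫ t in Ioc c d, f t = 0 := by
    intro c d hc hcd hd1
    have hsub : Ioc (0:ℝ) c ∪ Ioc c d = Ioc 0 d := Ioc_union_Ioc_eq_Ioc hc hcd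
    have hdisj : Disjoint (Ioc (0:ℝ) c) (Ioc c d) := Ioc_disjoint_Ioc_of_le le_rfl
    have h1 : IntegrableOn f (Ioc (0:ℝ) c) volume :=
      hint.mono_set (Ioc_subset_Ioc le_rfl (hcd.trans hd1))
    have h2 : IntegrableOn f (Ioc c d) volume :=
      hint.mono_set (Ioc_subset_Ioc hc hd1)
    have := setIntegral_union hdisj measurableSet_Ioc h1 h2
    rw [hsub] at this
    have e1 : ∫ t in Ioc (0:ℝ) d, f t = 0 := h0 d ⟨hc.trans hcd, hd1⟩
    have e2 : ∫ t in Ioc (0:ℝ) c, f t = 0 := h0 c ⟨hc, hcd.trans hd1⟩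
    rw [e1, e2] at this
    linarith
  set ν₁ := μ.withDensity (fun t => ENNReal.ofReal (f t)) with hν₁
  set ν₂ := μ.withDensity (fun t => ENNReal.ofReal (-f t)) with hν₂
  have hfin : ∀ c d : ℝ, ν₁ (Ioc c d) ≠ ⊤ := by
    intro c d
    rw [hν₁, withDensity_apply _ measurableSet_Ioc]
    refine ne_top_of_le_ne_top hint.2.ne ?_
    refine le_trans (setLIntegral_le_lintegral _ _) (lintegral_mono fun t => ?_)
    calc ENNReal.ofReal (f t) ≤ ENNReal.ofReal |f t| :=
          ENNReal.ofReal_le_ofReal (le_abs_self _)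
      _ = ‖f t‖₊ := by rw [← Real.norm_eq_abs]; exact ofReal_norm_eq_enorm _
  have hIoc : ∀ c d : ℝ, c < d → ν₁ (Ioc c d) = ν₂ (Ioc c d) := by
    intro c d _
    rw [hν₁, hν₂, withDensity_apply _ measurableSet_Ioc, withDensity_apply _ measurableSet_Ioc,
      hμ, Measure.restrict_restrict measurableSet_Ioc, Ioc_inter_Ioc]
    set c' := max c 0 with hc'
    set d' := min d 1 with hd'
    rcases le_or_gt d' c' with h | h
    · rw [Ioc_eq_empty (not_lt.mpr h), Measure.restrict_empty, lintegral_zero_measure,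
        lintegral_zero_measure]
    · have hc0 : 0 ≤ c' := le_max_right _ _
      have hd1 : d' ≤ 1 := min_le_right _ _
      have hint' : IntegrableOn f (Ioc c' d') volume :=
        hint.mono_set (Ioc_subset_Ioc hc0 hd1)
      have hzero := key c' d' hc0 h.le hd1
      have hplus : IntegrableOn (fun t => max (f t) 0) (Ioc c' d') volume := hint'.pos_part
      have hminus : IntegrableOn (fun t => max (-f t) 0) (Ioc c' d') volume := hint'.neg.pos_part
      have hdiffeq : ∀ t, max (f t) 0 - max (-f t) 0 = f t := by
        intro t
        rcases le_total (f t) 0 with h | h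
        · rw [max_eq_right h, max_eq_left (neg_nonneg.mpr h)]; ring
        · rw [max_eq_left h, max_eq_right (neg_nonpos.mpr h)]; ring
      have heq : ∫ t in Ioc c' d', max (f t) 0 = ∫ t in Ioc c' d', max (-f t) 0 := by
        have hd2 : ∫ t in Ioc c' d', (max (f t) 0 - max (-f t) 0) = 0 := by
          simp only [hdiffeq]; exact hzero
        rw [integral_sub hplus hminus] at hd2
        linarith
      have e1 := ofReal_integral_eq_lintegral_ofReal hplus
        (Filter.Eventually.of_forall fun t => le_max_right _ _)
      have e2 := ofReal_integral_eq_lintegral_ofReal hminus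
        (Filter.Eventually.of_forall fun t => le_max_right _ _)
      calc ∫⁻ t, ENNReal.ofReal (f t) ∂(volume.restrict (Ioc c' d'))
          = ∫⁻ t, ENNReal.ofReal (max (f t) 0) ∂(volume.restrict (Ioc c' d')) := by
            simp only [ofReal_max_zero]
        _ = ENNReal.ofReal (∫ t in Ioc c' d', max (f t) 0) := e1.symm
        _ = ENNReal.ofReal (∫ t in Ioc c' d', max (-f t) 0) := by rw [heq]
        _ = ∫⁻ t, ENNReal.ofReal (max (-f t) 0) ∂(volume.restrict (Ioc c' d')) := e2
        _ = ∫⁻ t, ENNReal.ofReal (-f t) ∂(volume.restrict (Ioc c' d')) := by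
            simp only [ofReal_max_zero]
  have hext : ν₁ = ν₂ := Measure.ext_of_Ioc' ν₁ ν₂ (fun c d _ => hfin c d) hIoc
  have hae : (fun t => ENNReal.ofReal (f t)) =ᵐ[μ] (fun t => ENNReal.ofReal (-f t)) := by
    exact (withDensity_eq_iff_of_sigmaFinite (hma.ennreal_ofReal) (hma.neg.ennreal_ofReal)).mp hext
  filter_upwards [hae] with t ht
  rcases lt_trichotomy (f t) 0 with h | h | h
  · have h1 : ENNReal.ofReal (f t) = 0 := ENNReal.ofReal_of_nonpos h.le
    have h2 : 0 < ENNReal.ofReal (-f t) := ENNReal.ofReal_pos.mpr (by linarith)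
    rw [ht] at h1; exact absurd h1 h2.ne'
  · exact h
  · have h1 : ENNReal.ofReal (-f t) = 0 := ENNReal.ofReal_of_nonpos (by linarith)
    have h2 : 0 < ENNReal.ofReal (f t) := ENNReal.ofReal_pos.mpr h
    rw [← ht] at h1; exact absurd h1 h2.ne'

theorem stmt_11 (b : ℝ → ℝ → ℝ) (bs : ℝ → ℝ → ℝ)
    (hb : ContinuousOn (fun p : ℝ × ℝ => b p.1 p.2) (Icc 0 1 ×ˢ Icc 0 1))
    (hbs : ∀ t ∈ Icc (0:ℝ) 1, ∀ s ∈ Icc (0:ℝ) 1,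
      HasDerivWithinAt (fun s' => b t s') (bs t s) (Icc 0 1) s)
    (hbscont : ContinuousOn (fun p : ℝ × ℝ => bs p.1 p.2) (Icc 0 1 ×ˢ Icc 0 1))
    (hbpos : ∀ t ∈ Icc (0:ℝ) 1, 0 < b t 0)
    (a : ℝ → ℝ) (ha : Measurable a)
    (K : ℝ) (haK : ∀ t ∈ Icc (0:ℝ) 1, |a t| ≤ K)
    (hconv : ∀ u ∈ Icc (0:ℝ) 1, (∫ t in (0:ℝ)..u, b t (u - t) * a t) = 0) :
    ∀ᵐ t ∂(volume.restrict (Icc (0:ℝ) 1)), a t = 0 := by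
  classical
  set μ := volume.restrict (Ioc (0:ℝ) 1) with hμdef
  haveI hfinμ : IsFiniteMeasure μ := ⟨by
    rw [hμdef, Measure.restrict_apply_univ, Real.volume_Ioc]
    exact ENNReal.ofReal_lt_top⟩
  have hK0 : 0 ≤ K := (abs_nonneg _).trans (haK 0 (by norm_num))
  -- bound on bs
  obtain ⟨M, hM0, hM⟩ : ∃ M, 0 ≤ M ∧
      ∀ p ∈ Icc (0:ℝ) 1 ×ˢ Icc (0:ℝ) 1, |bs p.1 p.2| ≤ M := by
    obtain ⟨M, hM⟩ := (isCompact_Icc.prod isCompact_Icc).exists_bound_of_continuousOn hbscont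
    refine ⟨M, ?_, fun p hp => by simpa [Real.norm_eq_abs] using hM p hp⟩
    have := hM (0, 0) (by constructor <;> simp)
    exact (norm_nonneg _).trans this
  -- bound on b
  obtain ⟨Mb, hMb⟩ : ∃ Mb, ∀ p ∈ Icc (0:ℝ) 1 ×ˢ Icc (0:ℝ) 1, |b p.1 p.2| ≤ Mb := by
    obtain ⟨Mb, hMb⟩ := (isCompact_Icc.prod isCompact_Icc).exists_bound_of_continuousOn hb
    exact ⟨Mb, fun p hp => by simpa [Real.norm_eq_abs] using hMb p hp⟩
  -- positive lower bound for b · 0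
  obtain ⟨c, hc0, hcb⟩ : ∃ c, 0 < c ∧ ∀ t ∈ Icc (0:ℝ) 1, c ≤ b t 0 := by
    have hcont : ContinuousOn (fun t => b t 0) (Icc (0:ℝ) 1) := by
      have : (fun t => b t 0) = (fun p : ℝ × ℝ => b p.1 p.2) ∘ (fun t => (t, (0:ℝ))) := rfl
      rw [this]
      exact hb.comp (Continuous.continuousOn (continuous_id.prodMk continuous_const))
        (fun t ht => ⟨ht, by constructor <;> norm_num⟩)
    obtain ⟨t₀, ht₀, hmin⟩ := isCompact_Icc.exists_isMinOn (⟨0, by norm_num⟩ : (Icc (0:ℝ) 1).Nonempty) hcont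
    exact ⟨b t₀ 0, hbpos t₀ ht₀, fun t ht => hmin ht⟩
  -- FTC
  have ftc : ∀ t ∈ Icc (0:ℝ) 1, ∀ s ∈ Icc (0:ℝ) 1,
      b t s = b t 0 + ∫ σ in (0:ℝ)..s, bs t σ := by
    intro t ht s hs
    have hbst : ContinuousOn (fun s' => b t s') (Icc (0:ℝ) 1) := by
      have : (fun s' => b t s') = (fun p : ℝ × ℝ => b p.1 p.2) ∘ (fun s' => (t, s')) := rfl
      rw [this]
      exact hb.comp (Continuous.continuousOn (continuous_const.prodMk continuous_id)) (fun s2 hs2 => ⟨ht, hs2⟩)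
    have hbsc : ContinuousOn (fun s' => bs t s') (Icc (0:ℝ) 1) := by
      have : (fun s' => bs t s') = (fun p : ℝ × ℝ => bs p.1 p.2) ∘ (fun s' => (t, s')) := rfl
      rw [this]
      exact hbscont.comp (Continuous.continuousOn (continuous_const.prodMk continuous_id)) (fun s2 hs2 => ⟨ht, hs2⟩)
    have hkey : ∫ σ in (0:ℝ)..s, bs t σ = b t s - b t 0 := by
      refine integral_eq_sub_of_hasDeriv_right_of_le hs.1
        (hbst.mono (Icc_subset_Icc le_rfl hs.2)) (fun x hx => ?_) ?_
      · have hx1 : x ∈ Icc (0:ℝ) 1 := ⟨hx.1.le, hx.2.le.trans hs.2⟩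
        have := (hbs t ht x hx1).hasDerivAt (Icc_mem_nhds hx.1 (lt_of_lt_of_le hx.2 hs.2))
        exact this.hasDerivWithinAt
      · exact (hbsc.mono (by rw [uIcc_of_le hs.1]; exact Icc_subset_Icc le_rfl hs.2)).intervalIntegrable
    linarith [hkey]
  
  -- interval integrability of |a|
  have haint : IntegrableOn (fun t => |a t|) (Ioc (0:ℝ) 1) volume := by
    refine Integrable.mono' (integrable_const K) (ha.abs.aestronglyMeasurable) ?_
    filter_upwards [ae_restrict_mem measurableSet_Ioc] with t ht
    simpa [abs_abs] using haK t ⟨ht.1.le, ht.2⟩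
  -- integrability of t ↦ b t 0 * a t
  have hb0meas : AEMeasurable (fun t => b t 0 * a t) μ := by
    have hcont : ContinuousOn (fun t => b t 0) (Icc (0:ℝ) 1) := by
      have : (fun t => b t 0) = (fun p : ℝ × ℝ => b p.1 p.2) ∘ (fun t => (t, (0:ℝ))) := rfl
      rw [this]
      exact hb.comp (Continuous.continuousOn (continuous_id.prodMk continuous_const))
        (fun t ht => ⟨ht, by constructor <;> norm_num⟩)
    have h1 : AEMeasurable (fun t => b t 0) (volume.restrict (Icc (0:ℝ) 1)) :=
      hcont.aemeasurable measurableSet_Icc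
    have h2 : AEMeasurable (fun t => b t 0) μ :=
      h1.mono_measure (Measure.restrict_mono Ioc_subset_Icc_self le_rfl)
    exact h2.mul ha.aemeasurable
  have hf1int : IntegrableOn (fun t => b t 0 * a t) (Ioc (0:ℝ) 1) volume := by
    refine Integrable.mono' (integrable_const (Mb * K)) hb0meas.aestronglyMeasurable ?_
    filter_upwards [ae_restrict_mem measurableSet_Ioc] with t ht
    have h1 : |b t 0| ≤ Mb := hMb (t, 0) ⟨⟨ht.1.le, ht.2⟩, by constructor <;> norm_num⟩
    have h2 : |a t| ≤ K := haK t ⟨ht.1.le, ht.2⟩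
    calc ‖b t 0 * a t‖ = |b t 0| * |a t| := abs_mul _ _
      _ ≤ Mb * K := mul_le_mul h1 h2 (abs_nonneg _) ((abs_nonneg _).trans h1)
  -- the product setting
  set g : ℝ × ℝ → ℝ := fun p => bs p.1 (p.2 - p.1) * a p.1 with hgdef
  set Q : Set (ℝ × ℝ) := Ioc (0:ℝ) 1 ×ˢ Ioc (0:ℝ) 1 with hQdef
  have hQmeas : MeasurableSet Q := measurableSet_Ioc.prod measurableSet_Ioc
  set D : Set (ℝ × ℝ) := Q ∩ {p : ℝ × ℝ | p.1 ≤ p.2} with hDdef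
  have hDmeas : MeasurableSet D := hQmeas.inter (measurableSet_le measurable_fst measurable_snd)
  have hgD : AEStronglyMeasurable g ((volume : Measure (ℝ × ℝ)).restrict D) := by
    have hφ : ContinuousOn (fun p : ℝ × ℝ => bs p.1 (p.2 - p.1)) D := by
      refine hbscont.comp (Continuous.continuousOn
        (continuous_fst.prodMk (continuous_snd.sub continuous_fst))) ?_
      rintro ⟨t, r⟩ ⟨⟨ht, hr⟩, hle⟩
      simp only [mem_Ioc, mem_prod, Pi.sub_apply] at ht hr ⊢
      refine ⟨⟨ht.1.le, ht.2⟩, ?_, ?_⟩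
      · simp only [mem_setOf_eq] at hle; linarith
      · linarith [ht.1, hr.2]
    have h1 : AEMeasurable (fun p : ℝ × ℝ => bs p.1 (p.2 - p.1)) (volume.restrict D) :=
      hφ.aemeasurable hDmeas
    have h2 : AEMeasurable (fun p : ℝ × ℝ => a p.1) (volume.restrict D) :=
      (ha.comp measurable_fst).aemeasurable
    exact (h1.mul h2).aestronglyMeasurable
  have prodμ : μ.prod μ = (volume : Measure (ℝ × ℝ)).restrict Q := by
    rw [hμdef, Measure.prod_restrict, ← Measure.volume_eq_prod]
  haveI hQfin : IsFiniteMeasure ((volume : Measure (ℝ × ℝ)).restrict Q) := by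
    rw [← prodμ]; infer_instance
  set T : ℝ → Set (ℝ × ℝ) := fun u => {p : ℝ × ℝ | p.1 ≤ p.2 ∧ p.2 ≤ u} with hTdef
  have hTmem : ∀ u, ∀ p : ℝ × ℝ, p ∈ T u ↔ p.1 ≤ p.2 ∧ p.2 ≤ u := by
    intro u p; rw [hTdef]; exact Iff.rfl
  have hTmeas : ∀ u, MeasurableSet (T u) := fun u =>
    (measurableSet_le measurable_fst measurable_snd).inter
      (measurableSet_le measurable_snd measurable_const)
  have hFint : ∀ u, Integrable ((T u).indicator g) (μ.prod μ) := by
    intro u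
    rw [prodμ]
    have hsm : AEStronglyMeasurable ((T u).indicator g) (volume.restrict Q) := by
      rw [aestronglyMeasurable_indicator_iff (hTmeas u)]
      rw [Measure.restrict_restrict (hTmeas u)]
      refine hgD.mono_measure (Measure.restrict_mono ?_ le_rfl)
      rintro p ⟨hpT, hpQ⟩
      exact ⟨hpQ, ((hTmem u p).mp hpT).1⟩
    refine Integrable.mono' (integrable_const (M * K)) hsm ?_
    filter_upwards [ae_restrict_mem hQmeas] with p hp
    by_cases hpT : p ∈ T u
    · rw [indicator_of_mem hpT]
      have hp1 : p.1 ∈ Ioc (0:ℝ) 1 := hp.1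
      have hp2 : p.2 ∈ Ioc (0:ℝ) 1 := hp.2
      have h1 : |bs p.1 (p.2 - p.1)| ≤ M := by
        refine hM (p.1, p.2 - p.1) ⟨⟨hp1.1.le, hp1.2⟩, ?_, ?_⟩
        · simp only; linarith [((hTmem u p).mp hpT).1]
        · simp only; linarith [hp1.1, hp2.2]
      have h2 : |a p.1| ≤ K := haK p.1 ⟨hp1.1.le, hp1.2⟩
      calc ‖g p‖ = |bs p.1 (p.2 - p.1)| * |a p.1| := abs_mul _ _
        _ ≤ M * K := mul_le_mul h1 h2 (abs_nonneg _) hM0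
    · rw [indicator_of_notMem hpT]
      simp [mul_nonneg hM0 hK0]
  -- inner integral over r
  set h : ℝ → ℝ := fun r => ∫ t in Ioc (0:ℝ) r, bs t (r - t) * a t with hhdef
  have A1 : ∀ u ∈ Icc (0:ℝ) 1, ∀ t ∈ Ioc (0:ℝ) 1,
      (∫ r, (T u).indicator g (t, r) ∂μ)
        = (if t ≤ u then (∫ σ in (0:ℝ)..(u - t), bs t σ) * a t else 0) := by
    intro u hu t ht
    by_cases htu : t ≤ u
    · rw [if_pos htu]
      have hfun : (fun r => (T u).indicator g (t, r))
          = Set.indicator (Icc t u) (fun r => bs t (r - t) * a t) := by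
        funext r
        by_cases hr : r ∈ Icc t u
        · rw [indicator_of_mem hr,
            indicator_of_mem (show (t, r) ∈ T u from (hTmem u (t, r)).mpr ⟨hr.1, hr.2⟩)]
        · rw [indicator_of_notMem hr, indicator_of_notMem
            (fun hc => hr ⟨((hTmem u (t, r)).mp hc).1, ((hTmem u (t, r)).mp hc).2⟩)]
      rw [hfun, hμdef, MeasureTheory.integral_indicator measurableSet_Icc,
        Measure.restrict_restrict measurableSet_Icc,
        inter_eq_left.mpr (fun x hx => mem_Ioc.mpr ⟨lt_of_lt_of_le ht.1 (mem_Icc.mp hx).1, (mem_Icc.mp hx).2.trans hu.2⟩)]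
      rw [integral_Icc_eq_integral_Ioc, ← intervalIntegral.integral_of_le htu,
        intervalIntegral.integral_mul_const]
      congr 1
      have := intervalIntegral.integral_comp_sub_right (a := t) (b := u) (fun σ => bs t σ) t
      rw [sub_self] at this
      exact this
    · have hzero : ∀ r, (T u).indicator g (t, r) = 0 := by
        intro r
        refine indicator_of_notMem (fun hc => ?_) g
        have := (hTmem u (t, r)).mp hc
        exact htu (this.1.trans this.2)
      rw [if_neg htu]
      simp [hzero]
  have B1 : ∀ u ∈ Icc (0:ℝ) 1, ∀ r ∈ Ioc (0:ℝ) 1,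
      (∫ t, (T u).indicator g (t, r) ∂μ) = (if r ≤ u then h r else 0) := by
    intro u hu r hr
    by_cases hru : r ≤ u
    · rw [if_pos hru]
      have hfun : (fun t => (T u).indicator g (t, r))
          = Set.indicator (Iic r) (fun t => bs t (r - t) * a t) := by
        funext t
        by_cases htr : t ∈ Iic r
        · rw [indicator_of_mem htr,
            indicator_of_mem (show (t, r) ∈ T u from (hTmem u (t, r)).mpr ⟨htr, hru⟩)]
        · rw [indicator_of_notMem htr,
            indicator_of_notMem (fun hc => htr ((hTmem u (t, r)).mp hc).1)]
      rw [hfun, hμdef, MeasureTheory.integral_indicator measurableSet_Iic,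
        Measure.restrict_restrict measurableSet_Iic]
      have : Iic r ∩ Ioc 0 1 = Ioc 0 r := by
        ext x
        simp only [mem_inter_iff, mem_Iic, mem_Ioc]
        constructor
        · rintro ⟨h1, h2, h3⟩; exact ⟨h2, h1⟩
        · rintro ⟨h1, h2⟩; exact ⟨h2, h1, h2.trans hr.2⟩
      rw [this, hhdef]
    · rw [if_neg hru]
      have hzero : ∀ t, (T u).indicator g (t, r) = 0 := by
        intro t
        refine indicator_of_notMem (fun hc => ?_) g
        exact hru ((hTmem u (t, r)).mp hc).2
      simp [hzero]
  
  -- integrable marginals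
  have hPint : ∀ u ∈ Icc (0:ℝ) 1, Integrable
      (fun t => if t ≤ u then (∫ σ in (0:ℝ)..(u - t), bs t σ) * a t else 0) μ := by
    intro u hu
    refine ((hFint u).integral_prod_left).congr ?_
    filter_upwards [ae_restrict_mem measurableSet_Ioc] with t ht
    exact A1 u hu t ht
  have hhμint : Integrable h μ := by
    have h1 : Integrable (fun r => if r ≤ (1:ℝ) then h r else 0) μ := by
      refine ((hFint 1).integral_prod_right).congr ?_
      filter_upwards [ae_restrict_mem measurableSet_Ioc] with r hr
      exact B1 1 (by norm_num) r hr
    refine h1.congr ?_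
    filter_upwards [ae_restrict_mem measurableSet_Ioc] with r hr
    rw [if_pos hr.2]
  -- the Fubini identity
  have hind : ∀ u ∈ Icc (0:ℝ) 1, ∀ ψ : ℝ → ℝ,
      ∫ x, (if x ≤ u then ψ x else 0) ∂μ = ∫ x in Ioc (0:ℝ) u, ψ x := by
    intro u hu ψ
    have hset : (fun x => if x ≤ u then ψ x else 0) = Set.indicator (Iic u) ψ := by
      funext x; simp [Set.indicator_apply, mem_Iic]
    have hIic : Iic u ∩ Ioc (0:ℝ) 1 = Ioc 0 u := by
      ext x
      simp only [mem_inter_iff, mem_Iic, mem_Ioc]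
      constructor
      · rintro ⟨h1, h2, h3⟩; exact ⟨h2, h1⟩
      · rintro ⟨h1, h2⟩; exact ⟨h2, h1, h2.trans hu.2⟩
    rw [hset, hμdef, MeasureTheory.integral_indicator measurableSet_Iic,
      Measure.restrict_restrict measurableSet_Iic, hIic]
  have swap_id : ∀ u ∈ Icc (0:ℝ) 1,
      (∫ t in Ioc (0:ℝ) u, (∫ σ in (0:ℝ)..(u - t), bs t σ) * a t)
        = ∫ r in Ioc (0:ℝ) u, h r := by
    intro u hu
    calc (∫ t in Ioc (0:ℝ) u, (∫ σ in (0:ℝ)..(u - t), bs t σ) * a t)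
        = ∫ t, (if t ≤ u then (∫ σ in (0:ℝ)..(u - t), bs t σ) * a t else 0) ∂μ :=
          (hind u hu _).symm
      _ = ∫ t, (∫ r, (T u).indicator g (t, r) ∂μ) ∂μ := by
          refine integral_congr_ae ?_
          filter_upwards [ae_restrict_mem measurableSet_Ioc] with t ht
          exact (A1 u hu t ht).symm
      _ = ∫ r, (∫ t, (T u).indicator g (t, r) ∂μ) ∂μ :=
          integral_integral_swap (hFint u)
      _ = ∫ r, (if r ≤ u then h r else 0) ∂μ := by
          refine integral_congr_ae ?_
          filter_upwards [ae_restrict_mem measurableSet_Ioc] with r hr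
          exact B1 u hu r hr
      _ = ∫ r in Ioc (0:ℝ) u, h r := hind u hu h
  -- the key equation : ∫₀ᵘ (b t 0 * a t + h t) = 0
  have hmain : ∀ u ∈ Icc (0:ℝ) 1, ∫ t in Ioc (0:ℝ) u, (b t 0 * a t + h t) = 0 := by
    intro u hu
    have hμres : (μ.restrict (Ioc (0:ℝ) u)) = volume.restrict (Ioc (0:ℝ) u) := by
      rw [hμdef, Measure.restrict_restrict measurableSet_Ioc,
        inter_eq_left.mpr (Ioc_subset_Ioc le_rfl hu.2)]
    have hψint : IntegrableOn (fun t => (∫ σ in (0:ℝ)..(u - t), bs t σ) * a t)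
        (Ioc (0:ℝ) u) volume := by
      have h2 := ((hPint u hu).restrict (s := Ioc (0:ℝ) u))
      rw [hμres] at h2
      refine h2.congr ?_
      filter_upwards [ae_restrict_mem measurableSet_Ioc] with t ht
      rw [if_pos ht.2]
    have hhint' : IntegrableOn h (Ioc (0:ℝ) u) volume := by
      have h2 := hhμint.restrict (s := Ioc (0:ℝ) u)
      rwa [hμres] at h2
    have hf1' : IntegrableOn (fun t => b t 0 * a t) (Ioc (0:ℝ) u) volume :=
      hf1int.mono_set (Ioc_subset_Ioc le_rfl hu.2)
    have e0 : ∫ t in Ioc (0:ℝ) u, b t (u - t) * a t = 0 := by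
      rw [← intervalIntegral.integral_of_le hu.1]; exact hconv u hu
    have e1 : (∫ t in Ioc (0:ℝ) u, b t (u - t) * a t)
        = ∫ t in Ioc (0:ℝ) u,
            (b t 0 * a t + (∫ σ in (0:ℝ)..(u - t), bs t σ) * a t) := by
      refine setIntegral_congr_fun measurableSet_Ioc (fun t ht => ?_)
      have h1 : b t (u - t) = b t 0 + ∫ σ in (0:ℝ)..(u - t), bs t σ :=
        ftc t ⟨ht.1.le, ht.2.trans hu.2⟩ (u - t)
          ⟨by linarith [ht.2], by linarith [ht.1, hu.2]⟩
      rw [h1]; ring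
    rw [e1, integral_add hf1' hψint, swap_id u hu] at e0
    rw [integral_add hf1' hhint']
    exact e0
  -- a.e. pointwise equation
  have hsum_int : IntegrableOn (fun t => b t 0 * a t + h t) (Ioc (0:ℝ) 1) volume :=
    hf1int.add hhμint
  have haez : ∀ᵐ t ∂μ, b t 0 * a t + h t = 0 := by
    rw [hμdef]
    exact lemA _ hsum_int hmain
  -- Gronwall setup
  set w : ℝ → ℝ := fun r => ∫ s in Ioc (0:ℝ) r, |a s| with hwdef
  have hw0 : ∀ t, 0 ≤ w t := fun t => integral_nonneg (fun s => abs_nonneg _)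
  have hhb : ∀ r ∈ Ioc (0:ℝ) 1, |h r| ≤ M * w r := by
    intro r hr
    have hdom : IntegrableOn (fun t => M * |a t|) (Ioc (0:ℝ) r) volume :=
      (haint.mono_set (Ioc_subset_Ioc le_rfl hr.2)).const_mul M
    have hnorm : ‖∫ t in Ioc (0:ℝ) r, bs t (r - t) * a t‖
        ≤ ∫ t in Ioc (0:ℝ) r, M * |a t| := by
      refine norm_integral_le_of_norm_le hdom ?_
      filter_upwards [ae_restrict_mem measurableSet_Ioc] with t ht
      have h1 : |bs t (r - t)| ≤ M := by
        refine hM (t, r - t) ⟨⟨ht.1.le, ht.2.trans hr.2⟩, ?_, ?_⟩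
        · simp only; linarith [ht.2]
        · simp only; linarith [ht.1, hr.2]
      calc ‖bs t (r - t) * a t‖ = |bs t (r - t)| * |a t| := abs_mul _ _
        _ ≤ M * |a t| := mul_le_mul_of_nonneg_right h1 (abs_nonneg _)
    rw [MeasureTheory.integral_const_mul] at hnorm
    simpa [hhdef, hwdef, Real.norm_eq_abs] using hnorm
  set C : ℝ := M / c with hCdef
  have hC0 : 0 ≤ C := div_nonneg hM0 hc0.le
  have haew : ∀ᵐ t ∂μ, |a t| ≤ C * w t := by
    filter_upwards [haez, ae_restrict_mem measurableSet_Ioc] with t hz ht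
    have htIcc : t ∈ Icc (0:ℝ) 1 := ⟨ht.1.le, ht.2⟩
    have hbt : c ≤ b t 0 := hcb t htIcc
    have h2 : |b t 0| * |a t| = |h t| := by
      rw [← abs_mul, show b t 0 * a t = -h t by linarith, abs_neg]
    have h3 : c * |a t| ≤ |b t 0| * |a t| := by
      apply mul_le_mul_of_nonneg_right _ (abs_nonneg _)
      rw [abs_of_pos (hbpos t htIcc)]; exact hbt
    have h5 : |h t| ≤ M * w t := hhb t ht
    have h6 : c * |a t| ≤ M * w t := by linarith
    rw [hCdef, div_mul_eq_mul_div, le_div_iff₀ hc0]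
    linarith
  -- iteration
  have hiter : ∀ n : ℕ, ∀ t ∈ Icc (0:ℝ) 1, w t ≤ K * C ^ n * t ^ n / n.factorial := by
    intro n
    induction n with
    | zero =>
      intro t ht
      have hb1 : w t ≤ ∫ s in Ioc (0:ℝ) t, K := by
        refine setIntegral_mono_on (haint.mono_set (Ioc_subset_Ioc le_rfl ht.2))
          (integrableOn_const (by simp [Real.volume_Ioc]))
          measurableSet_Ioc (fun s hs => haK s ⟨hs.1.le, hs.2.trans ht.2⟩)
      have hb2 : ∫ s in Ioc (0:ℝ) t, (K:ℝ) = K * t := by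
        rw [setIntegral_const, Real.volume_real_Ioc_of_le ht.1, smul_eq_mul]
        ring
      have : w t ≤ K * t := hb2 ▸ hb1
      calc w t ≤ K * t := this
        _ ≤ K * 1 := mul_le_mul_of_nonneg_left ht.2 hK0
        _ = K * C ^ 0 * t ^ 0 / (Nat.factorial 0) := by norm_num
    | succ n ih =>
      intro t ht
      have hstep : w t ≤ ∫ s in Ioc (0:ℝ) t, C * (K * C ^ n * s ^ n / n.factorial) := by
        refine integral_mono_ae (haint.mono_set (Ioc_subset_Ioc le_rfl ht.2))
          ((Continuous.integrableOn_Ioc (continuous_const.mul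
            ((continuous_const.mul (continuous_pow n)).div_const _)))) ?_
        have haew' : ∀ᵐ s ∂(volume.restrict (Ioc (0:ℝ) t)), |a s| ≤ C * w s := by
          refine ae_restrict_of_ae_restrict_of_subset (Ioc_subset_Ioc le_rfl ht.2) ?_
          rw [← hμdef]; exact haew
        filter_upwards [haew', ae_restrict_mem measurableSet_Ioc] with s h1 h2
        exact h1.trans (mul_le_mul_of_nonneg_left (ih s ⟨h2.1.le, h2.2.trans ht.2⟩) hC0)
      have hcomp : ∫ s in Ioc (0:ℝ) t, C * (K * C ^ n * s ^ n / n.factorial)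
          = C * K * C ^ n / n.factorial * (t ^ (n + 1) / (n + 1)) := by
        rw [← intervalIntegral.integral_of_le ht.1]
        have harr : ∀ s : ℝ, C * (K * C ^ n * s ^ n / n.factorial)
            = (C * K * C ^ n / n.factorial) * s ^ n := fun s => by ring
        simp_rw [harr]
        rw [intervalIntegral.integral_const_mul, integral_pow, zero_pow (Nat.succ_ne_zero n),
          sub_zero]
      have hfac : (0:ℝ) < n.factorial := by
        exact_mod_cast Nat.factorial_pos n
      have hfin : C * K * C ^ n / n.factorial * (t ^ (n + 1) / (n + 1))
          = K * C ^ (n + 1) * t ^ (n + 1) / ((n + 1).factorial) := by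
        rw [Nat.factorial_succ]
        push_cast
        field_simp
        ring
      calc w t ≤ _ := hstep
        _ = _ := hcomp
        _ = _ := hfin
  -- conclude
  have hw1 : w 1 = 0 := by
    have hle : ∀ n : ℕ, w 1 ≤ K * C ^ n / n.factorial := by
      intro n; simpa using hiter n 1 (by norm_num)
    have htend : Filter.Tendsto (fun n : ℕ => K * C ^ n / n.factorial)
        Filter.atTop (nhds 0) := by
      have h1 := (FloorSemiring.tendsto_pow_div_factorial_atTop C).const_mul K
      simp only [mul_zero] at h1
      refine h1.congr (fun n => by rw [mul_div_assoc])
    exact le_antisymm (ge_of_tendsto htend (Filter.Eventually.of_forall hle)) (hw0 1)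
  have hz : ∀ᵐ t ∂μ, a t = 0 := by
    have h1 : ∫ t in Ioc (0:ℝ) 1, |a t| = 0 := hw1
    have h2 := (integral_eq_zero_iff_of_nonneg (fun t => abs_nonneg (a t)) haint).mp h1
    rw [hμdef]
    filter_upwards [h2] with t ht
    exact abs_eq_zero.mp ht
  rw [← MeasureTheory.restrict_Ioc_eq_restrict_Icc]
  rw [hμdef] at hz
  exact hz
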